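/- A finite group G is an AC-group if and only if for all noncentral elements x and y of G, either C_G(x) = C_G(y) or C_G(x) ∩ C_G(y) = Z(G). -/
import Mathlib


/-- An abelian partition of a group `G`: a family of `n` pairwise disjoint sets covering `G`,
each of size at least 2 and consisting of pairwise commuting elements. -/
def IsAbelianPartition {G : Type*} [Group G] {n : ℕ} (A : Fin n → Set G) : Prop :=
  (∀ i, 2 ≤ (A i).ncard) ∧ (⋃ i, A i) = Set.univ ∧
    Pairwise (Function.onFun Disjoint A) ∧
    ∀ i, ∀ x ∈ A i, ∀ y ∈ A i, x * y = y * x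

/-- The minimal number of parts in an abelian partition of `G` (0 if none exists). -/
noncomputable def apDegree (G : Type*) [Group G] : ℕ :=
  sInf {n | ∃ A : Fin n → Set G, IsAbelianPartition A}

/-- The maximal size of a noncommuting subset of `G`. -/
noncomputable def maxNoncommuting (G : Type*) [Group G] : ℕ :=
  sSup {k | ∃ S : Set G, S.ncard = k ∧ ∀ x ∈ S, ∀ y ∈ S, x ≠ y → x * y ≠ y * x}

theorem AC_iff_centralizers_eq_or_meet_center
    {G : Type*} [Group G] [Finite G] :
    (∀ x : G, x ∉ Subgroup.center G →
        ∀ a ∈ Subgroup.centralizer {x}, ∀ b ∈ Subgroup.centralizer {x}, a * b = b * a) ↔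
      (∀ x y : G, x ∉ Subgroup.center G → y ∉ Subgroup.center G →
        Subgroup.centralizer {x} = Subgroup.centralizer {y} ∨
          Subgroup.centralizer ({x} : Set G) ⊓ Subgroup.centralizer {y} =
            Subgroup.center G) := by
  constructor
  · intro hAC x y hx hy
    by_cases h : Subgroup.centralizer ({x} : Set G) ⊓ Subgroup.centralizer {y} =
        Subgroup.center G
    · exact Or.inr h
    left
    have hle : Subgroup.center G ≤
        Subgroup.centralizer ({x} : Set G) ⊓ Subgroup.centralizer {y} :=
      le_inf (Subgroup.center_le_centralizer _) (Subgroup.center_le_centralizer _)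
    obtain ⟨z, hz, hzc⟩ : ∃ z, z ∈ Subgroup.centralizer ({x} : Set G) ⊓
        Subgroup.centralizer {y} ∧ z ∉ Subgroup.center G := by
      by_contra hcon
      push_neg at hcon
      exact h (le_antisymm (fun z hz => hcon z hz) hle)
    obtain ⟨hzx, hzy⟩ := hz
    have key : ∀ w : G, w ∉ Subgroup.center G → z ∈ Subgroup.centralizer ({w} : Set G) →
        Subgroup.centralizer ({w} : Set G) = Subgroup.centralizer ({z} : Set G) := by
      intro w hw hzw
      have hwz : w ∈ Subgroup.centralizer ({z} : Set G) := by
        rw [Subgroup.mem_centralizer_singleton_iff] at hzw ⊢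
        exact hzw.symm
      apply le_antisymm
      · intro a ha
        rw [Subgroup.mem_centralizer_singleton_iff]
        exact (hAC w hw z hzw a ha).symm
      · intro a ha
        rw [Subgroup.mem_centralizer_singleton_iff]
        exact (hAC z hzc w hwz a ha).symm
    rw [key x hx hzx, key y hy hzy]
  · intro h x hx a ha b hb
    by_cases hac : a ∈ Subgroup.center G
    · exact (Subgroup.mem_center_iff.mp hac b).symm
    by_cases hbc : b ∈ Subgroup.center G
    · exact Subgroup.mem_center_iff.mp hbc a
    have hxa : x ∈ Subgroup.centralizer ({a} : Set G) := by
      rw [Subgroup.mem_centralizer_singleton_iff]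
      exact (Subgroup.mem_centralizer_singleton_iff.mp ha).symm
    have hxb : x ∈ Subgroup.centralizer ({b} : Set G) := by
      rw [Subgroup.mem_centralizer_singleton_iff]
      exact (Subgroup.mem_centralizer_singleton_iff.mp hb).symm
    rcases h a b hac hbc with heq | hinf
    · have hba : b ∈ Subgroup.centralizer ({a} : Set G) := by
        rw [heq, Subgroup.mem_centralizer_singleton_iff]
      exact (Subgroup.mem_centralizer_singleton_iff.mp hba).symm
    · exact absurd (hinf ▸ (Subgroup.mem_inf.mpr ⟨hxa, hxb⟩)) hx
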